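/- Until with an always left operand prolongs the invariance: Let X be a type, μ : X → Prop a predicate, Ψ : (ℕ → X) → Prop a signal-predicate, and a, b, c, d naturals with c ≤ d. Let Φ be the signal-predicate defined by Φ(y) iff ∀ t ∈ [c,d], μ(y t) (i.e., Φ is the semantics of G_{[c,d]}μ). Then for every signal x : ℕ → X, the until operator (Φ U[a,b] Ψ) holds at x if and only if there exists λ ∈ [a,b] such that Ψ holds at the λ-shift of x and μ(x t) holds for every t ∈ [c, d+λ]. -/
import Mathlib

/-- The `k`-shift of a signal. -/
def shift {X : Type} (x : ℕ → X) (k : ℕ) : ℕ → X := fun t => x (t + k)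

/-- The eventually operator `F[a,b]Φ` on signal-predicates. -/
def Ev {X : Type} (a b : ℕ) (Φ : (ℕ → X) → Prop) (x : ℕ → X) : Prop :=
  ∃ k ∈ Set.Icc a b, Φ (shift x k)

/-- The always operator `G[a,b]Φ` on signal-predicates. -/
def Al {X : Type} (a b : ℕ) (Φ : (ℕ → X) → Prop) (x : ℕ → X) : Prop :=
  ∀ k ∈ Set.Icc a b, Φ (shift x k)

/-- The until operator `Φ U[a,b] Ψ` on signal-predicates. -/
def Un {X : Type} (Φ : (ℕ → X) → Prop) (a b : ℕ) (Ψ : (ℕ → X) → Prop) (x : ℕ → X) : Prop :=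
  ∃ k ∈ Set.Icc a b, Ψ (shift x k) ∧ ∀ j ∈ Set.Icc 0 k, Φ (shift x j)

/-- **Until with an always left operand prolongs the invariance.**
If `Φ` is the semantics of `G_{[c,d]}μ`, then `Φ U[a,b] Ψ` holds at `x` iff there is
`l ∈ [a,b]` with `Ψ` holding at the `l`-shift of `x` and `μ (x t)` for all `t ∈ [c, d+l]`. -/
theorem until_always_left_prolongs {X : Type} (μ : X → Prop) (Ψ : (ℕ → X) → Prop)
    (a b c d : ℕ) (hcd : c ≤ d) (x : ℕ → X) :
    Un (fun y => ∀ t ∈ Set.Icc c d, μ (y t)) a b Ψ x ↔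
      ∃ l ∈ Set.Icc a b, Ψ (shift x l) ∧ ∀ t ∈ Set.Icc c (d + l), μ (x t) := by
  constructor
  · rintro ⟨k, hk, hΨ, hall⟩
    refine ⟨k, hk, hΨ, ?_⟩
    rintro t ⟨hct, htd⟩
    by_cases h : t ≤ d
    · have := hall 0 ⟨Nat.zero_le _, Nat.zero_le _⟩ t ⟨hct, h⟩
      simpa [shift] using this
    · push_neg at h
      have hj : t - d ≤ k := by omega
      have := hall (t - d) ⟨Nat.zero_le _, hj⟩ d ⟨hcd, le_refl d⟩
      simpa [shift, Nat.add_sub_cancel' (le_of_lt h)] using this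
  · rintro ⟨l, hl, hΨ, hall⟩
    refine ⟨l, hl, hΨ, ?_⟩
    rintro j ⟨-, hj⟩ t ⟨hct, htd⟩
    exact hall (t + j) ⟨le_trans hct (Nat.le_add_right _ _), by omega⟩
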